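/- If K is an extremally disconnected compact Hausdorff topological space, then C(K) (the space of real-valued continuous functions on K with the supremum norm) admits a lattice tiling by closed unit balls: there exists an additive subgroup D of C(K) that is 2-separated and such that the closed balls of radius 1 centered at the points of D cover C(K), i.e., D is 1-dense. -/

import Mathlib

open Set Metric ENNReal

universe u

/-- A set `P` in a normed space is `r`-separated if `‖x - y‖ ≥ r`
for all distinct `x, y ∈ P`. -/
def IsRSeparated {X : Type u} [NormedAddCommGroup X] (r : ℝ) (P : Set X) : Prop :=
  ∀ x ∈ P, ∀ y ∈ P, x ≠ y → r ≤ ‖x - y‖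

/-- A set `P` in a normed space is `r`-dense if every point of the space is within
distance `r` of some point of `P`. -/
def IsRDense {X : Type u} [NormedAddCommGroup X] (r : ℝ) (P : Set X) : Prop :=
  ∀ x : X, ∃ p ∈ P, ‖x - p‖ ≤ r

/-- The simultaneous packing and covering constant `γ(X)`: the infimum of all `r > 0`
for which `X` contains a set that is simultaneously `2`-separated and `r`-dense. -/
noncomputable def packingCovering (X : Type u) [NormedAddCommGroup X] : ℝ :=
  sInf {r : ℝ | 0 < r ∧ ∃ P : Set X, IsRSeparated 2 P ∧ IsRDense r P}

/-- The lattice simultaneous packing and covering constant `γ*(X)`: the infimum of all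
`r > 0` for which `X` contains an additive subgroup that is simultaneously `2`-separated
and `r`-dense. -/
noncomputable def packingCoveringStar (X : Type u) [NormedAddCommGroup X] : ℝ :=
  sInf {r : ℝ | 0 < r ∧ ∃ D : AddSubgroup X,
    IsRSeparated 2 (D : Set X) ∧ IsRDense r (D : Set X)}

/-- The Kottman constant `K(X)`: the supremum of all `r > 0` such that the closed unit
ball of `X` contains an infinite `r`-separated set. -/
noncomputable def kottman (X : Type u) [NormedAddCommGroup X] : ℝ :=
  sSup {r : ℝ | 0 < r ∧ ∃ P : Set X,
    P ⊆ closedBall (0 : X) 1 ∧ P.Infinite ∧ IsRSeparated r P}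

/-- The `κ`-Kottman constant `K(X; κ)`: the supremum of all `r > 0` such that the closed
unit ball of `X` contains an `r`-separated set of cardinality `κ`. -/
noncomputable def kottmanCard (X : Type u) [NormedAddCommGroup X] (κ : Cardinal.{u}) : ℝ :=
  sSup {r : ℝ | 0 < r ∧ ∃ P : Set X,
    P ⊆ closedBall (0 : X) 1 ∧ Cardinal.mk ↥P = κ ∧ IsRSeparated r P}

/-- The density character of a topological space: the smallest cardinality of a dense
subset. -/
noncomputable def densChar (X : Type u) [TopologicalSpace X] : Cardinal.{u} :=
  sInf {c : Cardinal.{u} | ∃ s : Set X, Dense s ∧ Cardinal.mk ↥s = c}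

/-- The modulus of local uniform rotundity `δ_X(x₀, ε)` at a point `x₀`. -/
noncomputable def lurModulus {X : Type u} [NormedAddCommGroup X] (x₀ : X) (ε : ℝ) : ℝ :=
  sInf {d : ℝ | ∃ y : X, ‖y‖ ≤ 1 ∧ ε ≤ ‖x₀ - y‖ ∧ d = 1 - ‖x₀ + y‖ / 2}

/-- `x₀` is a LUR (locally uniformly rotund) point of the unit ball of `X` if it lies on
the unit sphere and `δ_X(x₀, ε) > 0` for every `ε ∈ (0, 2]`. -/
def IsLURPoint {X : Type u} [NormedAddCommGroup X] (x₀ : X) : Prop :=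
  ‖x₀‖ = 1 ∧ ∀ ε : ℝ, 0 < ε → ε ≤ 2 → 0 < lurModulus x₀ ε

/-- The modulus of convexity `δ_X(ε)` of a normed space `X`. -/
noncomputable def convexityModulus (X : Type u) [NormedAddCommGroup X] (ε : ℝ) : ℝ :=
  sInf {d : ℝ | ∃ x y : X, ‖x‖ ≤ 1 ∧ ‖y‖ ≤ 1 ∧ ε ≤ ‖x - y‖ ∧ d = 1 - ‖x + y‖ / 2}

/-- The tangential modulus of convexity `φ_X(t)`, defined through Birkhoff-James
orthogonality: `φ_X(t) = inf {‖x + t v‖ - 1 : x, v ∈ S_X, x ⊥_BJ v}`. -/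
noncomputable def tangentialModulus (X : Type u) [NormedAddCommGroup X]
    [NormedSpace ℝ X] (t : ℝ) : ℝ :=
  sInf {d : ℝ | ∃ x v : X, ‖x‖ = 1 ∧ ‖v‖ = 1 ∧
    (∀ lam : ℝ, ‖x‖ ≤ ‖x + lam • v‖) ∧ d = ‖x + t • v‖ - 1}

/-- `φ : [0,∞) → [0,∞)` is a positive modulus: `φ(0) = 0`, `φ` is continuous at `0`,
`t ↦ φ(t)/t` is non-decreasing on `(0,∞)`, and `φ(t) > 0` for `t > 0`. -/
def IsPositiveModulus (φ : ℝ → ℝ) : Prop :=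
  φ 0 = 0 ∧ Filter.Tendsto φ (nhdsWithin 0 (Set.Ici 0)) (nhds 0) ∧
    (∀ s t : ℝ, 0 < s → s ≤ t → φ s / s ≤ φ t / t) ∧ ∀ t : ℝ, 0 < t → 0 < φ t

/-- The positive modulus `φ_p(t) = (1 + t^p)^(1/p) - 1` (real exponents). -/
noncomputable def phiP (p : ℝ) (t : ℝ) : ℝ := (1 + t ^ p) ^ (1 / p) - 1

/-- A normed space `X` is `(<κ)-octahedral` if for every `ε > 0` and every closed
subspace `Z` of `X` of density character `< κ` there is a unit vector `x` with
`‖z + λ x‖ ≥ (1 - ε)(‖z‖ + |λ|)` for all `z ∈ Z`, `λ ∈ ℝ`. -/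
def KappaOctahedral (κ : Cardinal.{u}) (X : Type u) [NormedAddCommGroup X]
    [NormedSpace ℝ X] : Prop :=
  ∀ ε : ℝ, 0 < ε → ∀ Z : Submodule ℝ X, IsClosed (Z : Set X) → densChar ↥Z < κ →
    ∃ x : X, ‖x‖ = 1 ∧ ∀ z ∈ Z, ∀ lam : ℝ, (1 - ε) * (‖z‖ + |lam|) ≤ ‖z + lam • x‖

/-- A normed space `X` is `(<κ)-φ-octahedral` if for every `ε > 0` and every closed
subspace `Z` of `X` of density character `< κ` there is a unit vector `x` with
`‖z + λ x‖ ≥ (1 - ε)(1 + φ(|λ|))` for all `z` in the unit sphere of `Z` and `λ ∈ ℝ`. -/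
def PhiOctahedral (κ : Cardinal.{u}) (φ : ℝ → ℝ) (X : Type u) [NormedAddCommGroup X]
    [NormedSpace ℝ X] : Prop :=
  ∀ ε : ℝ, 0 < ε → ∀ Z : Submodule ℝ X, IsClosed (Z : Set X) → densChar ↥Z < κ →
    ∃ x : X, ‖x‖ = 1 ∧ ∀ z ∈ Z, ‖z‖ = 1 →
      ∀ lam : ℝ, (1 - ε) * (1 + φ |lam|) ≤ ‖z + lam • x‖

namespace TilingAux

variable {K : Type u} [TopologicalSpace K] [CompactSpace K] [T2Space K]
  [ExtremallyDisconnected K]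

noncomputable def V (f : C(K, ℝ)) (n : ℤ) : Set K :=
  f ⁻¹' Set.Ioo (2 * (n : ℝ) - 1) (2 * (n : ℝ) + 1) ∪
    interior (f ⁻¹' {(2 * (n : ℝ) + 1)})

omit [CompactSpace K] [T2Space K] [ExtremallyDisconnected K] in
lemma isOpen_V (f : C(K, ℝ)) (n : ℤ) : IsOpen (V f n) :=
  ((isOpen_Ioo).preimage f.continuous).union isOpen_interior

noncomputable def Cn (f : C(K, ℝ)) (n : ℤ) : Set K := closure (V f n)

omit [CompactSpace K] [T2Space K] in
lemma isClopen_Cn (f : C(K, ℝ)) (n : ℤ) : IsClopen (Cn f n) :=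
  ⟨isClosed_closure, ExtremallyDisconnected.open_closure _ (isOpen_V f n)⟩

omit [CompactSpace K] [T2Space K] [ExtremallyDisconnected K] in
lemma Cn_subset (f : C(K, ℝ)) (n : ℤ) :
    Cn f n ⊆ f ⁻¹' Set.Icc (2 * (n : ℝ) - 1) (2 * (n : ℝ) + 1) := by
  apply closure_minimal _ (isClosed_Icc.preimage f.continuous)
  apply Set.union_subset
  · exact Set.preimage_mono Set.Ioo_subset_Icc_self
  · refine interior_subset.trans ?_
    intro x hx
    simp only [Set.mem_preimage, Set.mem_singleton_iff] at hx
    simp only [Set.mem_preimage, Set.mem_Icc, hx]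
    constructor <;> linarith

omit [CompactSpace K] [T2Space K] [ExtremallyDisconnected K] in
lemma mem_Cn_bound {f : C(K, ℝ)} {n : ℤ} {x : K} (h : x ∈ Cn f n) :
    2 * (n : ℝ) - 1 ≤ f x ∧ f x ≤ 2 * (n : ℝ) + 1 := Cn_subset f n h

omit [CompactSpace K] [T2Space K] [ExtremallyDisconnected K] in
lemma Cn_disjoint {f : C(K, ℝ)} {m n : ℤ} (h : m + 2 ≤ n) {x : K}
    (hm : x ∈ Cn f m) (hn : x ∈ Cn f n) : False := by
  have h1 := (mem_Cn_bound hm).2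
  have h2 := (mem_Cn_bound hn).1
  have : (m : ℝ) + 2 ≤ (n : ℝ) := by exact_mod_cast h
  linarith

omit [CompactSpace K] [T2Space K] [ExtremallyDisconnected K] in
lemma exists_mem_Cn (f : C(K, ℝ)) (x : K) : ∃ n : ℤ, x ∈ Cn f n := by
  set r : ℝ := f x with hr
  set n : ℤ := ⌈(r - 1) / 2⌉ with hn
  have hlt : 2 * (n : ℝ) - 1 < r := by
    have := Int.ceil_lt_add_one ((r - 1) / 2)
    rw [← hn] at this; nlinarith
  have hle : r ≤ 2 * (n : ℝ) + 1 := by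
    have := Int.le_ceil ((r - 1) / 2)
    rw [← hn] at this; nlinarith
  rcases lt_or_eq_of_le hle with hlt2 | heq
  · exact ⟨n, subset_closure (Or.inl ⟨hlt, hlt2⟩)⟩
  · by_cases hx : x ∈ interior (f ⁻¹' {(2 * (n : ℝ) + 1)})
    · exact ⟨n, subset_closure (Or.inr hx)⟩
    · have hmem : x ∈ closure (f ⁻¹' Set.Ioo (2 * (n : ℝ) - 1) (2 * (n : ℝ) + 1) ∪
          f ⁻¹' Set.Ioo (2 * (n : ℝ) + 1) (2 * (n : ℝ) + 3)) := by
        rw [_root_.mem_closure_iff]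
        intro O hO hxO
        by_contra hempty
        rw [Set.not_nonempty_iff_eq_empty] at hempty
        apply hx
        apply mem_interior.mpr
        refine ⟨O ∩ f ⁻¹' Set.Ioo (2 * (n : ℝ)) (2 * (n : ℝ) + 2), ?_,
          hO.inter (isOpen_Ioo.preimage f.continuous), hxO, ?_⟩
        · rintro y ⟨hyO, hy1, hy2⟩
          simp only [Set.mem_preimage, Set.mem_singleton_iff]
          by_contra hne
          have hy : y ∈ f ⁻¹' Set.Ioo (2 * (n : ℝ) - 1) (2 * (n : ℝ) + 1) ∪
              f ⁻¹' Set.Ioo (2 * (n : ℝ) + 1) (2 * (n : ℝ) + 3) := by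
            rcases lt_or_gt_of_ne hne with h | h
            · exact Or.inl ⟨by linarith, h⟩
            · exact Or.inr ⟨h, by linarith⟩
          have : y ∈ O ∩ _ := ⟨hyO, hy⟩
          rw [hempty] at this
          exact this
        · simp only [Set.mem_preimage, Set.mem_Ioo, ← hr, ← heq]
          constructor <;> linarith
      rw [closure_union] at hmem
      rcases hmem with h | h
      · exact ⟨n, closure_mono Set.subset_union_left h⟩
      · refine ⟨n + 1, closure_mono ?_ h⟩
        intro y hy
        apply Set.subset_union_left
        simp only [Set.mem_preimage, Set.mem_Ioo] at hy ⊢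
        push_cast
        constructor <;> linarith [hy.1, hy.2]

/-- The partition sets. -/
noncomputable def W (f : C(K, ℝ)) (n : ℤ) : Set K := Cn f n \ Cn f (n - 1)

omit [CompactSpace K] [T2Space K] in
lemma isClopen_W (f : C(K, ℝ)) (n : ℤ) : IsClopen (W f n) :=
  (isClopen_Cn f n).diff (isClopen_Cn f (n - 1))

omit [CompactSpace K] [T2Space K] [ExtremallyDisconnected K] in
lemma exists_mem_W (f : C(K, ℝ)) (x : K) : ∃ n : ℤ, x ∈ W f n := by
  obtain ⟨n, hn⟩ := exists_mem_Cn f x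
  by_cases h : x ∈ Cn f (n - 1)
  · refine ⟨n - 1, h, fun hc => ?_⟩
    exact Cn_disjoint (by omega : n - 1 - 1 + 2 ≤ n) hc hn
  · exact ⟨n, hn, h⟩

omit [CompactSpace K] [T2Space K] [ExtremallyDisconnected K] in
lemma W_unique {f : C(K, ℝ)} {m n : ℤ} {x : K} (hm : x ∈ W f m) (hn : x ∈ W f n) :
    m = n := by
  by_contra hne
  rcases lt_or_gt_of_ne hne with h | h
  · rcases eq_or_lt_of_le (by omega : m + 1 ≤ n) with h1 | h1
    · exact hn.2 (by rw [← h1]; simpa using hm.1)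
    · exact Cn_disjoint (by omega : m + 2 ≤ n) hm.1 hn.1
  · rcases eq_or_lt_of_le (by omega : n + 1 ≤ m) with h1 | h1
    · exact hm.2 (by rw [← h1]; simpa using hn.1)
    · exact Cn_disjoint (by omega : n + 2 ≤ m) hn.1 hm.1

omit [CompactSpace K] [T2Space K] [ExtremallyDisconnected K] in
lemma W_bound {f : C(K, ℝ)} {n : ℤ} {x : K} (h : x ∈ W f n) :
    |f x - 2 * (n : ℝ)| ≤ 1 := by
  have := mem_Cn_bound h.1
  rw [abs_le]
  constructor <;> linarith [this.1, this.2]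

omit [T2Space K] [ExtremallyDisconnected K] in
lemma W_range {f : C(K, ℝ)} {n : ℤ} {x : K} (h : x ∈ W f n) {N : ℕ}
    (hN : ‖f‖ + 1 ≤ 2 * (N : ℝ)) : -(N : ℤ) ≤ n ∧ n ≤ (N : ℤ) := by
  have hb := mem_Cn_bound h.1
  have habs : |f x| ≤ ‖f‖ := by
    simpa using f.norm_coe_le_norm x
  rw [abs_le] at habs
  constructor
  · have : -(2 * ((N : ℤ) : ℝ)) ≤ 2 * (n : ℝ) := by push_cast; linarith [hb.2]
    have h2 : -((N : ℤ) : ℝ) ≤ (n : ℝ) := by linarith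
    exact_mod_cast h2
  · have h2 : (n : ℝ) ≤ ((N : ℤ) : ℝ) := by push_cast; linarith [hb.1]
    exact_mod_cast h2

/-- The continuous, `2ℤ`-valued approximation. -/
noncomputable def gApprox (f : C(K, ℝ)) (N : ℕ) : C(K, ℝ) where
  toFun := fun x => ∑ n ∈ Finset.Icc (-(N : ℤ)) (N : ℤ),
    Set.indicator (W f n) (fun _ => (2 * (n : ℝ))) x
  continuous_toFun := by
    apply continuous_finset_sum
    intro n _
    classical
    have h1 : Continuous (fun x : K => if x ∈ W f n then (2 * (n : ℝ)) else 0) := by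
      apply Continuous.if _ continuous_const continuous_const
      intro a ha
      rw [show {x : K | x ∈ W f n} = W f n from rfl, (isClopen_W f n).frontier_eq] at ha
      exact absurd ha (Set.notMem_empty a)
    convert h1 using 1
    funext x
    exact Set.indicator_apply _ _ _

omit [T2Space K] in
lemma gApprox_eq {f : C(K, ℝ)} {N : ℕ} (hN : ‖f‖ + 1 ≤ 2 * (N : ℝ)) (x : K) :
    ∃ m : ℤ, x ∈ W f m ∧ gApprox f N x = 2 * (m : ℝ) := by
  obtain ⟨m, hm⟩ := exists_mem_W f x
  refine ⟨m, hm, ?_⟩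
  have hmem : m ∈ Finset.Icc (-(N : ℤ)) (N : ℤ) := by
    rw [Finset.mem_Icc]
    exact W_range hm hN
  show (∑ n ∈ Finset.Icc (-(N : ℤ)) (N : ℤ),
      Set.indicator (W f n) (fun _ => (2 * (n : ℝ))) x) = 2 * (m : ℝ)
  rw [Finset.sum_eq_single m]
  · simp [Set.indicator_of_mem hm]
  · intro n _ hne
    apply Set.indicator_of_notMem
    intro hc
    exact hne (W_unique hc hm)
  · intro hc
    exact absurd hmem hc

/-- The subgroup of continuous functions with values in `2ℤ`. -/
noncomputable def evenSubgroup (K : Type u) [TopologicalSpace K] :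
    AddSubgroup (ContinuousMap K ℝ) where
  carrier := {g | ∀ x, ∃ k : ℤ, g x = 2 * (k : ℝ)}
  zero_mem' := fun x => ⟨0, by simp⟩
  add_mem' := by
    rintro a b ha hb x
    obtain ⟨k, hk⟩ := ha x
    obtain ⟨l, hl⟩ := hb x
    exact ⟨k + l, by push_cast [ContinuousMap.add_apply, hk, hl]; ring⟩
  neg_mem' := by
    rintro a ha x
    obtain ⟨k, hk⟩ := ha x
    exact ⟨-k, by push_cast [ContinuousMap.neg_apply, hk]; ring⟩

end TilingAux

/-- If `K` is an extremally disconnected compact Hausdorff space, then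
`C(K, ℝ)` admits a lattice tiling by closed unit balls: there is an additive subgroup
which is `2`-separated and `1`-dense. -/
theorem exists_lattice_tiling_continuousMap (K : Type u) [TopologicalSpace K]
    [CompactSpace K] [T2Space K] [ExtremallyDisconnected K] :
    ∃ D : AddSubgroup (ContinuousMap K ℝ),
      IsRSeparated 2 (D : Set (ContinuousMap K ℝ)) ∧
        IsRDense 1 (D : Set (ContinuousMap K ℝ)) := by
  refine ⟨TilingAux.evenSubgroup K, ?_, ?_⟩
  · intro g hg h hh hne
    have hx : ∃ x, g x ≠ h x := by
      by_contra hc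
      push_neg at hc
      exact hne (ContinuousMap.ext hc)
    obtain ⟨x, hx⟩ := hx
    obtain ⟨k, hk⟩ := hg x
    obtain ⟨l, hl⟩ := hh x
    have hkl : k ≠ l := fun h' => hx (by rw [hk, hl, h'])
    have h1 : (1 : ℝ) ≤ |(k : ℝ) - (l : ℝ)| := by
      have := Int.one_le_abs (sub_ne_zero.mpr hkl)
      push_cast [← Int.cast_sub, ← Int.cast_abs]
      exact_mod_cast this
    have h2 : (2 : ℝ) ≤ ‖(g - h) x‖ := by
      rw [ContinuousMap.sub_apply, hk, hl]
      rw [show (2 * (k : ℝ) - 2 * (l : ℝ)) = 2 * ((k : ℝ) - l) by ring]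
      rw [Real.norm_eq_abs, abs_mul]
      rw [abs_of_nonneg (by norm_num : (0:ℝ) ≤ 2)]
      linarith
    calc (2 : ℝ) ≤ ‖(g - h) x‖ := h2
      _ ≤ ‖g - h‖ := (g - h).norm_coe_le_norm x
  · intro f
    set N : ℕ := ⌈‖f‖⌉₊ + 1 with hNdef
    have hN : ‖f‖ + 1 ≤ 2 * (N : ℝ) := by
      have h1 : ‖f‖ ≤ (⌈‖f‖⌉₊ : ℝ) := Nat.le_ceil _
      push_cast [hNdef]
      linarith [Nat.cast_nonneg (α := ℝ) ⌈‖f‖⌉₊]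
    refine ⟨TilingAux.gApprox f N, ?_, ?_⟩
    · intro x
      obtain ⟨m, _, hm⟩ := TilingAux.gApprox_eq hN x
      exact ⟨m, hm⟩
    · rw [ContinuousMap.norm_le _ (by norm_num : (0:ℝ) ≤ 1)]
      intro x
      obtain ⟨m, hmW, hm⟩ := TilingAux.gApprox_eq hN x
      rw [ContinuousMap.sub_apply, hm, Real.norm_eq_abs]
      exact TilingAux.W_bound hmW
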